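/- Let A be a finite-dimensional special Z₂-graded Banach algebra over ℝ with identity 1, and let G be a linear ξ-group in A, i.e., a subgroup of the group of units of A such that π₀(g)·G·π₀(g)⁻¹ ⊆ G for every g ∈ G. Then the tangent space T₁(G) is closed under the angle bracket and the square bracket: if X, Y ∈ T₁(G), then X·Y − Y·X ∈ T₁(G) and X·π₀(Y) − π₀(Y)·X ∈ T₁(G). Consequently (T₁(G), +, ⟨·,·⟩, [·,·]) is a right Hu-Liu Leibniz algebra over ℝ. (Proposition 3.1) -/

import Mathlib

/-- The tangent space at 1 to a subgroup `G` of the units of a normed algebra `A`: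
all derivatives `a'(0)` of curves `a : ℝ → A` that take values in `G`, satisfy
`a 0 = 1`, and are differentiable at `0`. -/
def tangentSpaceAtOne {A : Type*} [NormedRing A] [NormedAlgebra ℝ A]
    (G : Subgroup Aˣ) : Set A :=
  {X : A | ∃ a : ℝ → A, (∀ t : ℝ, ∃ g ∈ G, a t = (g : A)) ∧ a 0 = 1 ∧ HasDerivAt a X 0}

/-- Proposition 3.1: for a linear ξ-group G in a finite-dimensional special
ℤ₂-graded real Banach algebra, the tangent space T₁(G) is closed under the angle
bracket ⟨X,Y⟩ = X·π₀(Y) − π₀(Y)·X and the square bracket [X,Y] = XY − YX, and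
(T₁(G), +, ⟨·,·⟩, [·,·]) is a right Hu-Liu Leibniz algebra over ℝ. -/
theorem tangentSpace_hu_liu_leibniz {A : Type*} [NormedRing A] [NormedAlgebra ℝ A]
    [FiniteDimensional ℝ A]
    (A₀ A₁ : Submodule ℝ A)
    (hA₀closed : IsClosed (A₀ : Set A)) (hA₁closed : IsClosed (A₁ : Set A))
    (hsup : A₀ ⊔ A₁ = ⊤) (hinf : A₀ ⊓ A₁ = ⊥)
    (h00 : ∀ a ∈ A₀, ∀ b ∈ A₀, a * b ∈ A₀)
    (h01 : ∀ a ∈ A₀, ∀ b ∈ A₁, a * b ∈ A₁)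
    (h10 : ∀ a ∈ A₁, ∀ b ∈ A₀, a * b ∈ A₁)
    (h11 : ∀ a ∈ A₁, ∀ b ∈ A₁, a * b = 0)
    (π₀ : A →ₗ[ℝ] A)
    (hπmem : ∀ x : A, π₀ x ∈ A₀)
    (hπrest : ∀ x : A, x - π₀ x ∈ A₁)
    (G : Subgroup Aˣ)
    (hxi : ∀ g ∈ G, ∀ h ∈ G, ∃ h' ∈ G,
      π₀ (g : A) * (h : A) * π₀ ((g⁻¹ : Aˣ) : A) = (h' : A))
    (angle square : A → A → A)
    (hangle : ∀ x y : A, angle x y = x * π₀ y - π₀ y * x)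
    (hsquare : ∀ x y : A, square x y = x * y - y * x) :
    ((0 : A) ∈ tangentSpaceAtOne G)
    ∧ (∀ X ∈ tangentSpaceAtOne G, ∀ Y ∈ tangentSpaceAtOne G,
        X + Y ∈ tangentSpaceAtOne G)
    ∧ (∀ (lam : ℝ), ∀ X ∈ tangentSpaceAtOne G, lam • X ∈ tangentSpaceAtOne G)
    ∧ (∀ X ∈ tangentSpaceAtOne G, ∀ Y ∈ tangentSpaceAtOne G,
        square X Y ∈ tangentSpaceAtOne G)
    ∧ (∀ X ∈ tangentSpaceAtOne G, ∀ Y ∈ tangentSpaceAtOne G,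
        angle X Y ∈ tangentSpaceAtOne G)
    ∧ (∀ x ∈ tangentSpaceAtOne G, ∀ y ∈ tangentSpaceAtOne G, ∀ z ∈ tangentSpaceAtOne G,
        angle (angle x y) z = angle x (angle y z) + angle (angle x z) y)
    ∧ (∀ x ∈ tangentSpaceAtOne G, square x x = 0)
    ∧ (∀ x ∈ tangentSpaceAtOne G, ∀ y ∈ tangentSpaceAtOne G, ∀ z ∈ tangentSpaceAtOne G,
        square (square x y) z + square (square y z) x + square (square z x) y = 0)
    ∧ (∀ x ∈ tangentSpaceAtOne G, ∀ y ∈ tangentSpaceAtOne G, ∀ z ∈ tangentSpaceAtOne G,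
        angle x (square y z) = angle x (angle y z))
    ∧ (∀ x ∈ tangentSpaceAtOne G, ∀ y ∈ tangentSpaceAtOne G,
        square (angle x x) y = angle (angle x x) y)
    ∧ (∀ x ∈ tangentSpaceAtOne G, ∀ y ∈ tangentSpaceAtOne G, ∀ z ∈ tangentSpaceAtOne G,
        angle (square x y) z + square (angle y z) x + square y (angle x z) = 0)
    ∧ (∀ x ∈ tangentSpaceAtOne G, ∀ y ∈ tangentSpaceAtOne G, ∀ z ∈ tangentSpaceAtOne G,
        square (angle x y) z + square z (square x y) + square z (angle y x)
          + angle z (angle x y) = 0) := by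
  classical
  -- basic facts about π₀
  have hmem0 : ∀ x : A, x ∈ A₀ → x ∈ A₁ → x = 0 := by
    intro x h0 h1
    have hx : x ∈ A₀ ⊓ A₁ := ⟨h0, h1⟩
    rw [hinf] at hx
    simpa using hx
  have hpp : ∀ x : A, π₀ (π₀ x) = π₀ x := by
    intro x
    have h1 : π₀ x - π₀ (π₀ x) ∈ A₁ := hπrest (π₀ x)
    have h0 : π₀ x - π₀ (π₀ x) ∈ A₀ := Submodule.sub_mem _ (hπmem x) (hπmem _)
    have := hmem0 _ h0 h1
    exact (eq_of_sub_eq_zero this).symm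
  have hq0 : ∀ x y : A, (x - π₀ x) * (y - π₀ y) = 0 :=
    fun x y => h11 _ (hπrest x) _ (hπrest y)
  have hpm : ∀ x y : A, π₀ (x * y) = π₀ x * π₀ y := by
    intro x y
    have hd : x * y - π₀ x * π₀ y ∈ A₁ := by
      have e : x * y - π₀ x * π₀ y =
          (x - π₀ x) * π₀ y + π₀ x * (y - π₀ y) + (x - π₀ x) * (y - π₀ y) := by
        noncomm_ring
      rw [e]
      exact Submodule.add_mem _
        (Submodule.add_mem _ (h10 _ (hπrest x) _ (hπmem y)) (h01 _ (hπmem x) _ (hπrest y)))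
        (by rw [hq0 x y]; exact Submodule.zero_mem _)
    have h1 : π₀ (x * y) - π₀ x * π₀ y ∈ A₁ := by
      have e : π₀ (x * y) - π₀ x * π₀ y =
          -(x * y - π₀ (x * y)) + (x * y - π₀ x * π₀ y) := by noncomm_ring
      rw [e]
      exact Submodule.add_mem _ (Submodule.neg_mem _ (hπrest _)) hd
    have h0 : π₀ (x * y) - π₀ x * π₀ y ∈ A₀ :=
      Submodule.sub_mem _ (hπmem _) (h00 _ (hπmem x) _ (hπmem y))
    exact eq_of_sub_eq_zero (hmem0 _ h0 h1)
  have hp1 : π₀ (1 : A) = 1 := by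
    have e2 : π₀ ((1 : A) * 1) = π₀ 1 * π₀ 1 := hpm 1 1
    rw [one_mul] at e2
    have e4 : (1 : A) - π₀ 1 =
        ((1 : A) - π₀ 1) * (1 - π₀ 1) - (π₀ 1 * π₀ 1 - π₀ 1) := by noncomm_ring
    rw [hq0 1 1, ← e2, sub_self, sub_zero] at e4
    exact (eq_of_sub_eq_zero e4).symm
  -- derivative helpers
  have hDπ : ∀ (f : ℝ → A) (F : A) (t : ℝ), HasDerivAt f F t →
      HasDerivAt (fun s => π₀ (f s)) (π₀ F) t := by
    intro f F t hf
    have h := (LinearMap.toContinuousLinearMap π₀).hasFDerivAt (x := f t)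
    have := h.comp_hasDerivAt t hf
    exact this
  have hDinv : ∀ (f : ℝ → A) (F : A), HasDerivAt f F 0 → f 0 = 1 →
      HasDerivAt (fun s => Ring.inverse (f s)) (-F) 0 := by
    intro f F hf h0
    have h1 : HasFDerivAt (Ring.inverse : A → A)
        (-(ContinuousLinearMap.mulLeftRight ℝ A ((1 : Aˣ)⁻¹ : Aˣ) ((1 : Aˣ)⁻¹ : Aˣ))) (f 0) := by
      rw [h0]
      exact hasFDerivAt_ringInverse (1 : Aˣ)
    have := h1.comp_hasDerivAt 0 hf
    simp at this; exact this
  -- tangent space: zero, add, smul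
  have zmem : (0 : A) ∈ tangentSpaceAtOne G :=
    ⟨fun _ => 1, fun _ => ⟨1, one_mem G, rfl⟩, rfl, hasDerivAt_const 0 1⟩
  have amem : ∀ X ∈ tangentSpaceAtOne G, ∀ Y ∈ tangentSpaceAtOne G,
      X + Y ∈ tangentSpaceAtOne G := by
    rintro X ⟨a, haG, ha0, haD⟩ Y ⟨b, hbG, hb0, hbD⟩
    refine ⟨fun t => a t * b t, ?_, by show a 0 * b 0 = 1; rw [ha0, hb0, one_mul], ?_⟩
    · intro t
      obtain ⟨g, hg, hag⟩ := haG t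
      obtain ⟨h, hh, hbh⟩ := hbG t
      exact ⟨g * h, mul_mem hg hh, by show a t * b t = _; rw [hag, hbh, Units.val_mul]⟩
    · have := haD.mul hbD
      simp [ha0, hb0] at this; exact this
  have smem : ∀ (lam : ℝ), ∀ X ∈ tangentSpaceAtOne G,
      lam • X ∈ tangentSpaceAtOne G := by
    rintro lam X ⟨a, haG, ha0, haD⟩
    refine ⟨fun t => a (lam * t), fun t => haG _, by simpa using ha0, ?_⟩
    have hl : HasDerivAt (fun t : ℝ => lam * t) lam 0 := by
      simpa using (hasDerivAt_id (0 : ℝ)).const_mul lam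
    have haD' : HasDerivAt a X (lam * 0) := by simpa using haD
    have h := haD'.scomp 0 hl
    exact h
  -- the tangent space as a submodule, and the limit lemma
  let S : Submodule ℝ A :=
    { carrier := tangentSpaceAtOne G
      add_mem' := fun ha hb => amem _ ha _ hb
      zero_mem' := zmem
      smul_mem' := fun c x hx => smem c x hx }
  have hSclosed : IsClosed (S : Set A) := S.closed_of_finiteDimensional
  have hlim : ∀ (c : ℝ → A) (L : A), (∀ t, c t ∈ tangentSpaceAtOne G) →
      HasDerivAt c L 0 → L ∈ tangentSpaceAtOne G := by
    intro c L hc hD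
    have hT : Filter.Tendsto (slope c 0) (nhdsWithin 0 {(0 : ℝ)}ᶜ) (nhds L) :=
      hasDerivAt_iff_tendsto_slope.mp hD
    have hmem : ∀ t : ℝ, slope c 0 t ∈ S := by
      intro t
      have h1 : c t ∈ S := hc t
      have h0 : c 0 ∈ S := hc 0
      have : slope c 0 t = (t - 0)⁻¹ • (c t - c 0) := rfl
      rw [this]
      exact S.smul_mem _ (S.sub_mem h1 h0)
    exact hSclosed.mem_of_tendsto hT (Filter.Eventually.of_forall hmem)
  -- closure under the square bracket
  have sqmem : ∀ X ∈ tangentSpaceAtOne G, ∀ Y ∈ tangentSpaceAtOne G,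
      X * Y - Y * X ∈ tangentSpaceAtOne G := by
    rintro X ⟨a, haG, ha0, haD⟩ Y hY
    obtain ⟨b, hbG, hb0, hbD⟩ := hY
    have hct : ∀ t : ℝ, a t * Y * Ring.inverse (a t) ∈ tangentSpaceAtOne G := by
      intro t
      obtain ⟨g, hg, hag⟩ := haG t
      refine ⟨fun s => (g : A) * b s * ((g⁻¹ : Aˣ) : A), ?_, ?_, ?_⟩
      · intro s
        obtain ⟨h, hh, hbh⟩ := hbG s
        exact ⟨g * h * g⁻¹, mul_mem (mul_mem hg hh) (inv_mem hg),
          by show (g : A) * b s * _ = _; rw [hbh, Units.val_mul, Units.val_mul]⟩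
      · show (g : A) * b 0 * _ = 1
        rw [hb0, mul_one, Units.mul_inv]
      · have hD : HasDerivAt (fun s => (g : A) * b s * ((g⁻¹ : Aˣ) : A))
            ((g : A) * Y * ((g⁻¹ : Aˣ) : A)) 0 := by
          simpa using (hbD.const_mul ((g : A))).mul_const (((g⁻¹ : Aˣ) : A))
        have e : a t * Y * Ring.inverse (a t) = (g : A) * Y * ((g⁻¹ : Aˣ) : A) := by
          rw [hag, Ring.inverse_unit]
        rw [e]; exact hD
    have hinv : HasDerivAt (fun t => Ring.inverse (a t)) (-X) 0 := hDinv a X haD ha0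
    have hcD : HasDerivAt (fun t => a t * Y * Ring.inverse (a t)) (X * Y - Y * X) 0 := by
      have h1 := (haD.mul_const Y).mul hinv
      have h2 : X * Y * Ring.inverse (a 0) + a 0 * Y * -X = X * Y - Y * X := by
        rw [ha0, Ring.inverse_one]; noncomm_ring
      rw [h2] at h1; exact h1
    exact hlim _ _ hct hcD
  -- closure under the angle bracket
  have anmem : ∀ X ∈ tangentSpaceAtOne G, ∀ Y ∈ tangentSpaceAtOne G,
      X * π₀ Y - π₀ Y * X ∈ tangentSpaceAtOne G := by
    rintro X ⟨a, haG, ha0, haD⟩ Y ⟨b, hbG, hb0, hbD⟩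
    have hpb0 : π₀ (b 0) = 1 := by rw [hb0, hp1]
    have hct : ∀ t : ℝ, π₀ (b t) * X * Ring.inverse (π₀ (b t)) ∈ tangentSpaceAtOne G := by
      intro t
      obtain ⟨h, hh, hbh⟩ := hbG t
      have hu1 : π₀ ((h : A)) * π₀ (((h⁻¹ : Aˣ) : A)) = 1 := by
        rw [← hpm, Units.mul_inv, hp1]
      have hu2 : π₀ (((h⁻¹ : Aˣ) : A)) * π₀ ((h : A)) = 1 := by
        rw [← hpm, Units.inv_mul, hp1]
      have hinv_eq : Ring.inverse (π₀ (b t)) = π₀ (((h⁻¹ : Aˣ) : A)) := by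
        rw [hbh]
        exact Ring.inverse_unit ⟨π₀ ((h : A)), π₀ (((h⁻¹ : Aˣ) : A)), hu1, hu2⟩
      refine ⟨fun s => π₀ ((h : A)) * a s * π₀ (((h⁻¹ : Aˣ) : A)), ?_, ?_, ?_⟩
      · intro s
        obtain ⟨g, hg, hags⟩ := haG s
        obtain ⟨h', hh', he⟩ := hxi h hh g hg
        exact ⟨h', hh', by show π₀ ((h : A)) * a s * _ = _; rw [hags, he]⟩
      · show π₀ ((h : A)) * a 0 * _ = 1
        rw [ha0, mul_one, hu1]
      · have hD : HasDerivAt (fun s => π₀ ((h : A)) * a s * π₀ (((h⁻¹ : Aˣ) : A)))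
            (π₀ ((h : A)) * X * π₀ (((h⁻¹ : Aˣ) : A))) 0 := by
          simpa using (haD.const_mul (π₀ ((h : A)))).mul_const (π₀ (((h⁻¹ : Aˣ) : A)))
        have e : π₀ (b t) * X * Ring.inverse (π₀ (b t)) =
            π₀ ((h : A)) * X * π₀ (((h⁻¹ : Aˣ) : A)) := by
          rw [hinv_eq, hbh]
        rw [e]; exact hD
    have hπb : HasDerivAt (fun t => π₀ (b t)) (π₀ Y) 0 := hDπ b Y 0 hbD
    have hinvD : HasDerivAt (fun t => Ring.inverse (π₀ (b t))) (-(π₀ Y)) 0 :=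
      hDinv _ _ hπb hpb0
    have hcD : HasDerivAt (fun t => π₀ (b t) * X * Ring.inverse (π₀ (b t)))
        (π₀ Y * X - X * π₀ Y) 0 := by
      have h1 := (hπb.mul_const X).mul hinvD
      have h2 : π₀ Y * X * Ring.inverse (π₀ (b 0)) + π₀ (b 0) * X * -(π₀ Y) =
          π₀ Y * X - X * π₀ Y := by
        rw [hpb0, Ring.inverse_one]; noncomm_ring
      rw [h2] at h1; exact h1
    have hmem := hlim _ _ hct hcD
    have h3 := smem (-1 : ℝ) _ hmem
    have h4 : (-1 : ℝ) • (π₀ Y * X - X * π₀ Y) = X * π₀ Y - π₀ Y * X := by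
      rw [neg_one_smul, neg_sub]
    rwa [h4] at h3
  -- π₀ of the brackets
  have hPangle : ∀ u v : A, π₀ (u * π₀ v - π₀ v * u) = π₀ u * π₀ v - π₀ v * π₀ u := by
    intro u v
    rw [map_sub, hpm, hpm, hpp]
  have hPsq : ∀ u v : A, π₀ (u * v - v * u) = π₀ u * π₀ v - π₀ v * π₀ u := by
    intro u v
    rw [map_sub, hpm, hpm]
  refine ⟨zmem, amem, smem, ?_, ?_, ?_, ?_, ?_, ?_, ?_, ?_, ?_⟩
  · intro X hX Y hY
    rw [hsquare]
    exact sqmem X hX Y hY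
  · intro X hX Y hY
    rw [hangle]
    exact anmem X hX Y hY
  · -- right Leibniz identity
    intro x _ y _ z _
    simp only [hangle]
    rw [hPangle]
    noncomm_ring
  · intro x _
    rw [hsquare, sub_self]
  · intro x _ y _ z _
    simp only [hsquare]
    noncomm_ring
  · -- ⟨x,[y,z]⟩ = ⟨x,⟨y,z⟩⟩
    intro x _ y _ z _
    simp only [hangle, hsquare]
    rw [hPsq, hPangle]
  · -- [⟨x,x⟩,y] = ⟨⟨x,x⟩,y⟩
    intro x _ y _
    simp only [hangle, hsquare]
    have hpw : π₀ (x * π₀ x - π₀ x * x) = 0 := by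
      rw [map_sub, hpm, hpm, hpp, sub_self]
    have h1 : (x * π₀ x - π₀ x * x) * (y - π₀ y) = 0 := by
      have := hq0 (x * π₀ x - π₀ x * x) y
      rwa [hpw, sub_zero] at this
    have h2 : (y - π₀ y) * (x * π₀ x - π₀ x * x) = 0 := by
      have := hq0 y (x * π₀ x - π₀ x * x)
      rwa [hpw, sub_zero] at this
    have key : (x * π₀ x - π₀ x * x) * y - y * (x * π₀ x - π₀ x * x) =
        ((x * π₀ x - π₀ x * x) * π₀ y - π₀ y * (x * π₀ x - π₀ x * x)) +
        ((x * π₀ x - π₀ x * x) * (y - π₀ y) - (y - π₀ y) * (x * π₀ x - π₀ x * x)) := by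
      noncomm_ring
    rw [key, h1, h2, sub_zero, add_zero]
  · -- ⟨[x,y],z⟩ + [⟨y,z⟩,x] + [y,⟨x,z⟩] = 0
    intro x _ y _ z _
    simp only [hangle, hsquare]
    noncomm_ring
  · -- [⟨x,y⟩,z] + [z,[x,y]] + [z,⟨y,x⟩] + ⟨z,⟨x,y⟩⟩ = 0
    intro x _ y _ z _
    simp only [hangle, hsquare]
    rw [hPangle]
    have e1 := hq0 x y
    have e2 := hq0 y x
    have key : (x * π₀ y - π₀ y * x) * z - z * (x * π₀ y - π₀ y * x) +
        (z * (x * y - y * x) - (x * y - y * x) * z) +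
        (z * (y * π₀ x - π₀ x * y) - (y * π₀ x - π₀ x * y) * z) +
        (z * (π₀ x * π₀ y - π₀ y * π₀ x) - (π₀ x * π₀ y - π₀ y * π₀ x) * z) =
        z * ((x - π₀ x) * (y - π₀ y)) - ((x - π₀ x) * (y - π₀ y)) * z -
        (z * ((y - π₀ y) * (x - π₀ x)) - ((y - π₀ y) * (x - π₀ x)) * z) := by
      noncomm_ring
    rw [key, e1, e2]
    simp
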